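/- Let f : X → T be a flat morphism of schemes which is locally of finite presentation. Assume that T is irreducible and that for every point t of T the fiber X_t = X ×_T Spec κ(t) is irreducible. Then X is irreducible. -/

import Mathlib

open AlgebraicGeometry CategoryTheory Limits

universe u

section AlgebraAux

open TensorProduct

/-- A flat local ring homomorphism between local rings induces a surjective map
on prime spectra (faithfully flat descent of primes). -/
lemma comap_surjective_of_flat_of_isLocalHom
    {R S : Type u} [CommRing R] [CommRing S] [IsLocalRing R] [IsLocalRing S]
    (f : R →+* S) [IsLocalHom f] (hf : RingHom.Flat f) :
    Function.Surjective (PrimeSpectrum.comap f) := by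
  algebraize [f]
  haveI : IsLocalHom (algebraMap R S) := inferInstanceAs (IsLocalHom f)
  -- `S` is faithfully flat over `R`
  haveI hFF : Module.FaithfullyFlat R S := by
    refine ⟨fun m hm htop => ?_⟩
    rw [IsLocalRing.eq_maximalIdeal hm, Ideal.smul_top_eq_map,
      Submodule.restrictScalars_eq_top_iff] at htop
    have hle : Ideal.map (algebraMap R S) (IsLocalRing.maximalIdeal R)
        ≤ IsLocalRing.maximalIdeal S := by
      rw [Ideal.map_le_iff_le_comap]
      intro x hx
      refine (IsLocalRing.mem_maximalIdeal _).2 fun hu => ?_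
      exact (IsLocalRing.mem_maximalIdeal x).1 hx (IsUnit.of_map (algebraMap R S) x hu)
    rw [htop] at hle
    exact (IsLocalRing.maximalIdeal.isMaximal S).ne_top (top_le_iff.1 hle)
  intro p
  -- the residue field of `p`
  let Rp := Localization.AtPrime p.asIdeal
  let κ := IsLocalRing.ResidueField Rp
  have hker : RingHom.ker (algebraMap R κ) = p.asIdeal := by
    rw [IsScalarTower.algebraMap_eq R Rp κ, ← RingHom.comap_ker]
    show Ideal.comap _ (RingHom.ker (IsLocalRing.residue Rp)) = _
    rw [IsLocalRing.ker_residue]; exact Localization.AtPrime.comap_maximalIdeal ..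
  -- the fiber ring `κ ⊗[R] S` is nonzero
  haveI : Nontrivial (κ ⊗[R] S) := Module.FaithfullyFlat.rTensor_nontrivial R S κ
  obtain ⟨q', hq'⟩ := Ideal.exists_maximal (κ ⊗[R] S)
  haveI := hq'.isPrime
  refine ⟨⟨Ideal.comap (Algebra.TensorProduct.includeRight (R := R) (A := κ)
    (B := S)).toRingHom q', inferInstance⟩, ?_⟩
  ext1
  show Ideal.comap (algebraMap R S) (Ideal.comap _ q') = p.asIdeal
  have hcomp : (Algebra.TensorProduct.includeRight (R := R) (A := κ)
      (B := S)).toRingHom.comp (algebraMap R S) = algebraMap R (κ ⊗[R] S) :=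
    RingHom.ext fun r => Algebra.TensorProduct.includeRight.commutes r
  rw [Ideal.comap_comap, hcomp,
    IsScalarTower.algebraMap_eq R κ (κ ⊗[R] S), ← Ideal.comap_comap]
  have : Ideal.comap (algebraMap κ (κ ⊗[R] S)) q' = ⊥ := by
    rcases Ideal.eq_bot_or_top (Ideal.comap (algebraMap κ (κ ⊗[R] S)) q') with h | h
    · exact h
    · exact absurd h (Ideal.IsPrime.comap (algebraMap κ (κ ⊗[R] S))).ne_top
  rw [this, ← RingHom.ker_eq_comap_bot, hker]

end AlgebraAux

/-- Let `f : X ⟶ T` be a flat morphism of schemes (all stalk maps are flat ring maps)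
which is locally of finite presentation. Assume `T` is irreducible and every fiber
`X ×_T Spec κ(t)` is irreducible. Then `X` is irreducible. -/
theorem irreducibleSpace_of_flat_of_locallyOfFinitePresentation_of_irreducible_fibers
    {X T : Scheme.{u}} (f : X ⟶ T)
    (hflat : ∀ x : X, RingHom.Flat (f.stalkMap x).hom)
    [LocallyOfFinitePresentation f]
    [IrreducibleSpace T]
    (hfib : ∀ t : T, IrreducibleSpace ↥(pullback f (T.fromSpecResidueField t))) :
    IrreducibleSpace X := by
  -- the generic point of `T`
  set η := genericPoint T with hη
  -- every point of `X` lies in the closure of the generic fiber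
  have key : ∀ x : X, x ∈ closure (f.base ⁻¹' {η}) := by
    intro x
    have hspec : η ⤳ f.base x := genericPoint_specializes _
    have hmem : η ∈ Set.range (T.fromSpecStalk (f.base x)).base := by
      rw [Scheme.range_fromSpecStalk]; exact hspec
    obtain ⟨q, hq⟩ := hmem
    obtain ⟨q', hq'⟩ :=
      comap_surjective_of_flat_of_isLocalHom (f.stalkMap x).hom (hflat x) q
    set x' := (X.fromSpecStalk x).base q' with hx'def
    have hx'η : f.base x' = η := by
      have hcomm := Scheme.SpecMap_stalkMap_fromSpecStalk (f := f) (x := x)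
      have := congrArg (fun g : Spec (X.presheaf.stalk x) ⟶ T => g.base q') hcomm
      simp only [Scheme.Hom.comp_base, TopCat.coe_comp, Function.comp_apply] at this
      rw [show f.base x' = (T.fromSpecStalk (f.base x)).base (PrimeSpectrum.comap (f.stalkMap x).hom q') from this.symm, hq', hq]
    have hx'spec : x' ⤳ x := by
      have : x' ∈ Set.range (X.fromSpecStalk x).base := ⟨q', rfl⟩
      rwa [Scheme.range_fromSpecStalk] at this
    refine closure_mono (Set.singleton_subset_iff.2 ?_) hx'spec.mem_closure
    exact hx'η
  -- the generic fiber is irreducible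
  haveI := hfib η
  have hrange : Set.range (pullback.fst f (T.fromSpecResidueField η)).base
      = f.base ⁻¹' {η} := by
    rw [Scheme.Pullback.range_fst, Scheme.range_fromSpecResidueField]
  have hirr : IsIrreducible (Set.range (pullback.fst f (T.fromSpecResidueField η)).base) := by
    rw [← Set.image_univ]
    exact (IrreducibleSpace.isIrreducible_univ _).image _
      ((pullback.fst f (T.fromSpecResidueField η)).base.hom.continuous.continuousOn)
  rw [hrange] at hirr
  have hclos : closure (f.base ⁻¹' {η}) = Set.univ := Set.eq_univ_of_forall key
  have huniv : IsIrreducible (Set.univ : Set X) := by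
    rw [← hclos]; exact hirr.closure
  refine { isPreirreducible_univ := huniv.2,
           toNonempty := Set.nonempty_iff_univ_nonempty.2 huniv.1 }
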